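/- (Normal traction vanishes on the free surfaces, Eqs. 2.3–2.5) Let h > 0 and let λ, μ, ρ, ω, k, p, q be real numbers with k ≠ 0, q ≠ 0, (λ+2μ)·(k²+p²) = ρω² and μ·(k²+q²) = ρω². Set s₁ = 2cos(qh), s₂ = −((k²−q²)/k²)·cos(ph), s₃ = −(2p/k)·cos(qh), s₄ = −((k²−q²)/(qk))·cos(ph), and define V(z) = s₁cos(pz) + s₂cos(qz), W(z) = s₃sin(pz) + s₄sin(qz), u_x(x,z) = i·V(z)·e^{ikx}, u_z(x,z) = W(z)·e^{ikx}. Then the normal stress σ_zz = λ·(∂u_x/∂x + ∂u_z/∂z) + 2μ·∂u_z/∂z vanishes identically on both surfaces: σ_zz(x, h) = 0 and σ_zz(x, −h) = 0 for every x ∈ ℝ. -/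

import Mathlib

open Real Complex

/-- For the symmetric Lamb mode profiles (Eqs. 2.3–2.5), the normal stress
`σ_zz = λ(∂u_x/∂x + ∂u_z/∂z) + 2μ·∂u_z/∂z` vanishes on both free surfaces `z = ±h`. -/
theorem lamb_normal_traction_free (h : ℝ) (hh : 0 < h) (lam μ ρ ω k p q : ℝ)
    (hk : k ≠ 0) (hq : q ≠ 0)
    (hP : (lam + 2 * μ) * (k ^ 2 + p ^ 2) = ρ * ω ^ 2)
    (hS : μ * (k ^ 2 + q ^ 2) = ρ * ω ^ 2) :
    (let s₁ : ℝ := 2 * Real.cos (q * h);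
     let s₂ : ℝ := -((k ^ 2 - q ^ 2) / k ^ 2) * Real.cos (p * h);
     let s₃ : ℝ := -(2 * p / k) * Real.cos (q * h);
     let s₄ : ℝ := -((k ^ 2 - q ^ 2) / (q * k)) * Real.cos (p * h);
     let V : ℝ → ℝ := fun z => s₁ * Real.cos (p * z) + s₂ * Real.cos (q * z);
     let W : ℝ → ℝ := fun z => s₃ * Real.sin (p * z) + s₄ * Real.sin (q * z);
     let ux : ℝ → ℝ → ℂ := fun x z =>
        Complex.I * (V z : ℂ) * Complex.exp (Complex.I * k * x);
     let uz : ℝ → ℝ → ℂ := fun x z =>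
        (W z : ℂ) * Complex.exp (Complex.I * k * x);
     let σzz : ℝ → ℝ → ℂ := fun x z =>
        (lam : ℂ) * (deriv (fun x' => ux x' z) x + deriv (fun z' => uz x z') z)
          + 2 * (μ : ℂ) * deriv (fun z' => uz x z') z;
     ∀ x : ℝ, σzz x h = 0 ∧ σzz x (-h) = 0) := by
  intro s₁ s₂ s₃ s₄ V W ux uz σzz x
  -- derivative of the exponential factor in x
  have hexp : ∀ y : ℝ, HasDerivAt (fun x' : ℝ => Complex.exp (Complex.I * k * x'))
      (Complex.I * k * Complex.exp (Complex.I * k * y)) y := by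
    intro y
    have h1 : HasDerivAt (fun x' : ℝ => Complex.I * k * (x' : ℂ)) (Complex.I * k) y := by
      simpa using (Complex.ofRealCLM.hasDerivAt (x := y)).const_mul (Complex.I * (k : ℂ))
    simpa [mul_comm] using h1.cexp
  -- derivative of W
  have hW : ∀ z : ℝ, HasDerivAt W (s₃ * (p * Real.cos (p * z)) + s₄ * (q * Real.cos (q * z))) z := by
    intro z
    have h1 : HasDerivAt (fun z : ℝ => Real.sin (p * z)) (Real.cos (p * z) * p) z := by
      simpa [Function.comp_def] using (Real.hasDerivAt_sin (p * z)).comp z ((hasDerivAt_id z).const_mul p)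
    have h2 : HasDerivAt (fun z : ℝ => Real.sin (q * z)) (Real.cos (q * z) * q) z := by
      simpa [Function.comp_def] using (Real.hasDerivAt_sin (q * z)).comp z ((hasDerivAt_id z).const_mul q)
    have := (h1.const_mul s₃).add (h2.const_mul s₄)
    refine this.congr_deriv ?_
    ring
  -- deriv in x
  have dx : ∀ z : ℝ, deriv (fun x' => ux x' z) x
      = Complex.I * (V z : ℂ) * (Complex.I * k * Complex.exp (Complex.I * k * x)) := by
    intro z
    have := ((hexp x).const_mul (Complex.I * (V z : ℂ)))
    simpa [ux, mul_assoc] using this.deriv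
  -- deriv in z
  have dz : ∀ z : ℝ, deriv (fun z' => uz x z') z
      = ((s₃ * (p * Real.cos (p * z)) + s₄ * (q * Real.cos (q * z)) : ℝ) : ℂ)
          * Complex.exp (Complex.I * k * x) := by
    intro z
    have := ((hW z).ofReal_comp.mul_const (Complex.exp (Complex.I * k * x)))
    simpa [uz] using this.deriv
  -- the key real identity
  have key : ∀ z : ℝ, Real.cos (p * z) = Real.cos (p * h) → Real.cos (q * z) = Real.cos (q * h) →
      lam * (-(k * V z) + (s₃ * (p * Real.cos (p * z)) + s₄ * (q * Real.cos (q * z))))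
        + 2 * μ * (s₃ * (p * Real.cos (p * z)) + s₄ * (q * Real.cos (q * z))) = 0 := by
    intro z hpz hqz
    simp only [V, s₁, s₂, s₃, s₄, hpz, hqz]
    field_simp
    linear_combination (-2*Real.cos (q*h)*Real.cos (h*p))*hP
      + (2*Real.cos (q*h)*Real.cos (h*p))*hS
  -- putting it together
  have main : ∀ z : ℝ, Real.cos (p * z) = Real.cos (p * h) → Real.cos (q * z) = Real.cos (q * h) →
      σzz x z = 0 := by
    intro z hpz hqz
    have hkey := key z hpz hqz
    simp only [σzz, dx, dz]
    have : Complex.I * (V z : ℂ) * (Complex.I * k * Complex.exp (Complex.I * k * x))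
        = ((-(k * V z) : ℝ) : ℂ) * Complex.exp (Complex.I * k * x) := by
      push_cast
      rw [show Complex.I * (V z : ℂ) * (Complex.I * k * Complex.exp (Complex.I * k * x))
          = Complex.I * Complex.I * ((V z : ℂ) * k * Complex.exp (Complex.I * k * x)) by ring,
        Complex.I_mul_I]
      ring
    rw [this]
    rw [show ((lam : ℂ)) * ((((-(k * V z) : ℝ)) : ℂ) * Complex.exp (Complex.I * k * x)
          + (((s₃ * (p * Real.cos (p * z)) + s₄ * (q * Real.cos (q * z)) : ℝ)) : ℂ)
              * Complex.exp (Complex.I * k * x))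
        + 2 * (μ : ℂ) * ((((s₃ * (p * Real.cos (p * z)) + s₄ * (q * Real.cos (q * z)) : ℝ)) : ℂ)
              * Complex.exp (Complex.I * k * x))
        = (((lam * (-(k * V z) + (s₃ * (p * Real.cos (p * z)) + s₄ * (q * Real.cos (q * z))))
            + 2 * μ * (s₃ * (p * Real.cos (p * z)) + s₄ * (q * Real.cos (q * z))) : ℝ)) : ℂ)
            * Complex.exp (Complex.I * k * x) by push_cast; ring]
    rw [hkey]
    simp
  refine ⟨main h rfl rfl, main (-h) ?_ ?_⟩ <;>
    simp [mul_neg, Real.cos_neg]
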